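/- (a) For every v = (v_0, v_1, v_2)^T in R^3 and every natural number m, (1,1,1) E_0^m v = (-(3/4)v_0 + (9/8)v_1 + (9/8)v_2) (1/15)^m + (1/8)(14 v_0 - v_1 - v_2) (3/5)^m. (b) For every finite word w over {0,1,2}, setting v = E_w (2,2,2)^T, there exist constants 0 < k_1 <= k_2 such that for all m, k_1 (3/5)^m <= (1,1,1) E_0^m v <= k_2 (3/5)^m. -/

import Mathlib

open Matrix BigOperators

set_option maxHeartbeats 1000000

/-- The matrix `E_0`. -/
noncomputable def E0 : Matrix (Fin 3) (Fin 3) ℝ :=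
  !![47/75, -1/25, -1/25; 14/75, 3/25, -2/25; 14/75, -2/25, 3/25]

/-- The matrix `E_1`. -/
noncomputable def E1 : Matrix (Fin 3) (Fin 3) ℝ :=
  !![3/25, 14/75, -2/25; -1/25, 47/75, -1/25; -2/25, 14/75, 3/25]

/-- The matrix `E_2`. -/
noncomputable def E2 : Matrix (Fin 3) (Fin 3) ℝ :=
  !![3/25, -2/25, 14/75; -2/25, 3/25, 14/75; -1/25, -1/25, 47/75]

/-- `Emat i` is the matrix `E_i`. -/
noncomputable def Emat : Fin 3 → Matrix (Fin 3) (Fin 3) ℝ := ![E0, E1, E2]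

/-- For a word `w = [w₁, ..., wₘ]`, `Eword w = E_{wₘ} * ⋯ * E_{w₁}`
(the empty word giving the identity matrix). -/
noncomputable def Eword (w : List (Fin 3)) : Matrix (Fin 3) (Fin 3) ℝ :=
  ((w.map Emat).reverse).prod

/-- The invariant predicate: with `wᵢ = 15 vᵢ - (v₀+v₁+v₂)`, all `wᵢ > 0` and
`2(w₀w₁+w₁w₂+w₂w₀) - w₀² - w₁² - w₂² > 0` (rank-2 PSD condition). -/
def Pv (v : Fin 3 → ℝ) : Prop :=
  0 < 14*v 0 - v 1 - v 2 ∧ 0 < 14*v 1 - v 0 - v 2 ∧ 0 < 14*v 2 - v 0 - v 1 ∧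
  0 < 2*((14*v 0 - v 1 - v 2)*(14*v 1 - v 0 - v 2)
        + (14*v 1 - v 0 - v 2)*(14*v 2 - v 0 - v 1)
        + (14*v 2 - v 0 - v 1)*(14*v 0 - v 1 - v 2))
      - (14*v 0 - v 1 - v 2)^2 - (14*v 1 - v 0 - v 2)^2 - (14*v 2 - v 0 - v 1)^2

lemma keyQ {a b c : ℝ} (ha : 0 < a) (hb : 0 < b) (hc : 0 < c)
    (hD : 0 < 2*(a*b + b*c + c*a) - a^2 - b^2 - c^2) : 0 < 2*a + 2*b - c := by
  nlinarith [sq_nonneg (a - b), hc, mul_pos hc hc]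

lemma E0_mulVec (v : Fin 3 → ℝ) :
    E0 *ᵥ v = ![47/75*v 0 - 1/25*v 1 - 1/25*v 2,
                14/75*v 0 + 3/25*v 1 - 2/25*v 2,
                14/75*v 0 - 2/25*v 1 + 3/25*v 2] := by
  funext i
  fin_cases i <;>
    simp [E0, Matrix.mulVec, dotProduct, Fin.sum_univ_three] <;> ring

lemma E1_mulVec (v : Fin 3 → ℝ) :
    E1 *ᵥ v = ![3/25*v 0 + 14/75*v 1 - 2/25*v 2,
                -1/25*v 0 + 47/75*v 1 - 1/25*v 2,
                -2/25*v 0 + 14/75*v 1 + 3/25*v 2] := by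
  funext i
  fin_cases i <;>
    simp [E1, Matrix.mulVec, dotProduct, Fin.sum_univ_three] <;> ring

lemma E2_mulVec (v : Fin 3 → ℝ) :
    E2 *ᵥ v = ![3/25*v 0 - 2/25*v 1 + 14/75*v 2,
                -2/25*v 0 + 3/25*v 1 + 14/75*v 2,
                -1/25*v 0 - 1/25*v 1 + 47/75*v 2] := by
  funext i
  fin_cases i <;>
    simp [E2, Matrix.mulVec, dotProduct, Fin.sum_univ_three] <;> ring

lemma stepv (i : Fin 3) (v : Fin 3 → ℝ) (h : Pv v) : Pv (Emat i *ᵥ v) := by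
  obtain ⟨h1, h2, h3, h4⟩ := h
  have k12 : 0 < 2*(14*v 0 - v 1 - v 2) + 2*(14*v 1 - v 0 - v 2) - (14*v 2 - v 0 - v 1) :=
    keyQ h1 h2 h3 (by linarith [h4])
  have k13 : 0 < 2*(14*v 0 - v 1 - v 2) + 2*(14*v 2 - v 0 - v 1) - (14*v 1 - v 0 - v 2) :=
    keyQ h1 h3 h2 (by linarith [h4])
  have k23 : 0 < 2*(14*v 1 - v 0 - v 2) + 2*(14*v 2 - v 0 - v 1) - (14*v 0 - v 1 - v 2) :=
    keyQ h2 h3 h1 (by linarith [h4])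
  fin_cases i
  · show Pv (E0 *ᵥ v)
    rw [E0_mulVec v]
    unfold Pv
    simp only [Matrix.cons_val_zero, Matrix.cons_val_one, Matrix.head_cons,
      Matrix.cons_val_two, Matrix.tail_cons]
    refine ⟨by linarith, by linarith, by linarith, by linarith [h4]⟩
  · show Pv (E1 *ᵥ v)
    rw [E1_mulVec v]
    unfold Pv
    simp only [Matrix.cons_val_zero, Matrix.cons_val_one, Matrix.head_cons,
      Matrix.cons_val_two, Matrix.tail_cons]
    refine ⟨by linarith, by linarith, by linarith, by linarith [h4]⟩
  · show Pv (E2 *ᵥ v)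
    rw [E2_mulVec v]
    unfold Pv
    simp only [Matrix.cons_val_zero, Matrix.cons_val_one, Matrix.head_cons,
      Matrix.cons_val_two, Matrix.tail_cons]
    refine ⟨by linarith, by linarith, by linarith, by linarith [h4]⟩

lemma word_P (w : List (Fin 3)) (v : Fin 3 → ℝ) (h : Pv v) : Pv (Eword w *ᵥ v) := by
  induction w generalizing v with
  | nil => simpa [Eword, Matrix.one_mulVec] using h
  | cons a t ih =>
      have hw : Eword (a :: t) = Eword t * Emat a := by
        simp [Eword]
      rw [hw, ← Matrix.mulVec_mulVec]
      exact ih _ (stepv a v h)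

lemma parta (v : Fin 3 → ℝ) (m : ℕ) :
    (![1, 1, 1] : Fin 3 → ℝ) ⬝ᵥ ((E0 ^ m) *ᵥ v) =
      (-(3 / 4) * v 0 + (9 / 8) * v 1 + (9 / 8) * v 2) * (1 / 15 : ℝ) ^ m
        + (1 / 8) * (14 * v 0 - v 1 - v 2) * (3 / 5 : ℝ) ^ m := by
  induction m generalizing v with
  | zero =>
      simp [Matrix.one_mulVec, dotProduct, Fin.sum_univ_three]
      ring
  | succ m ih =>
      rw [pow_succ, ← Matrix.mulVec_mulVec, ih (E0 *ᵥ v), E0_mulVec v]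
      simp only [Matrix.cons_val_zero, Matrix.cons_val_one, Matrix.head_cons,
        Matrix.cons_val_two, Matrix.tail_cons]
      ring

theorem stmt_1 :
    (∀ (v : Fin 3 → ℝ) (m : ℕ),
      (![1, 1, 1] : Fin 3 → ℝ) ⬝ᵥ ((E0 ^ m) *ᵥ v) =
        (-(3 / 4) * v 0 + (9 / 8) * v 1 + (9 / 8) * v 2) * (1 / 15 : ℝ) ^ m
          + (1 / 8) * (14 * v 0 - v 1 - v 2) * (3 / 5 : ℝ) ^ m) ∧
    (∀ w : List (Fin 3), ∃ k₁ k₂ : ℝ, 0 < k₁ ∧ k₁ ≤ k₂ ∧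
      ∀ m : ℕ,
        k₁ * (3 / 5 : ℝ) ^ m ≤
            (![1, 1, 1] : Fin 3 → ℝ) ⬝ᵥ ((E0 ^ m) *ᵥ (Eword w *ᵥ ![2, 2, 2])) ∧
        (![1, 1, 1] : Fin 3 → ℝ) ⬝ᵥ ((E0 ^ m) *ᵥ (Eword w *ᵥ ![2, 2, 2])) ≤
            k₂ * (3 / 5 : ℝ) ^ m) := by
  constructor
  · exact parta
  · intro w
    set v : Fin 3 → ℝ := Eword w *ᵥ ![2, 2, 2] with hvdef
    have hbase : Pv ![2, 2, 2] := by
      unfold Pv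
      norm_num [show (![2, 2, 2] : Fin 3 → ℝ) 2 = 2 from rfl]
    have hP : Pv v := word_P w _ hbase
    obtain ⟨h1, h2, h3, h4⟩ := hP
    set X : ℝ := v 0 + v 1 + v 2 with hX_def
    set Y : ℝ := 1/8 * (14 * v 0 - v 1 - v 2) with hY_def
    have hX : 0 < X := by simp only [hX_def]; linarith
    have hY : 0 < Y := by simp only [hY_def]; linarith
    refine ⟨min X Y, max X Y, lt_min hX hY, min_le_max, fun m => ?_⟩
    have h15 : (1 / 15 : ℝ) ^ m = (3 / 5 : ℝ) ^ m * (1 / 9 : ℝ) ^ m := by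
      rw [← mul_pow]; norm_num
    set p : ℝ := (3 / 5 : ℝ) ^ m with hp_def
    set t : ℝ := (1 / 9 : ℝ) ^ m with ht_def
    have hp : 0 < p := by positivity
    have ht0 : 0 < t := by positivity
    have ht1 : t ≤ 1 := by
      rw [ht_def]
      exact pow_le_one₀ (by norm_num) (by norm_num)
    have hval : (![1, 1, 1] : Fin 3 → ℝ) ⬝ᵥ ((E0 ^ m) *ᵥ v) = ((X - Y) * t + Y) * p := by
      rw [parta v m, h15, hX_def, hY_def]; ring
    rw [hval]
    have hlo : min X Y ≤ (X - Y) * t + Y := by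
      have hms : min X Y ≤ X := min_le_left _ _
      have hmb : min X Y ≤ Y := min_le_right _ _
      nlinarith [mul_nonneg ht0.le (sub_nonneg.2 hms), mul_nonneg (sub_nonneg.2 ht1) (sub_nonneg.2 hmb)]
    have hhi : (X - Y) * t + Y ≤ max X Y := by
      have hms : X ≤ max X Y := le_max_left _ _
      have hmb : Y ≤ max X Y := le_max_right _ _
      nlinarith [mul_nonneg ht0.le (sub_nonneg.2 hms), mul_nonneg (sub_nonneg.2 ht1) (sub_nonneg.2 hmb)]
    exact ⟨mul_le_mul_of_nonneg_right hlo hp.le, mul_le_mul_of_nonneg_right hhi hp.le⟩
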